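/- Let 𝔩 be a finite-dimensional Lie algebra of holomorphic vector fields on a neighborhood of a ∈ E (E a finite-dimensional complex vector space) containing the field η = (z − a)·d/dz. Then every element of 𝔩 is a polynomial vector field. More precisely: if ξ = Σ_{k≥0} ξ_k is the homogeneous expansion of ξ ∈ 𝔩 around a (ξ_k = p_k(z−a)·d/dz with p_k k-homogeneous), then ad(η)ξ = Σ_k (k−1)ξ_k, and if dim 𝔩 = d then ξ_k = 0 for all but at most d values of k. -/

import Mathlib

open Metric Filter
open scoped Topology ENNReal NNReal

namespace Stmt2Aux

variable {E : Type*} [NormedAddCommGroup E] [NormedSpace ℂ E]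

/-- The formal power series `∑ bₖ tᵏ` in one variable. -/
noncomputable def lineSeries (b : ℕ → E) : FormalMultilinearSeries ℂ ℂ E :=
  fun k => ContinuousMultilinearMap.mkPiRing ℂ (Fin k) (b k)

lemma lineSeries_apply (b : ℕ → E) (k : ℕ) (t : ℂ) :
    lineSeries b k (fun _ => t) = t ^ k • b k := by
  simp [lineSeries, ContinuousMultilinearMap.mkPiRing_apply]

lemma lineSeries_coeff (b : ℕ → E) (k : ℕ) : (lineSeries b).coeff k = b k := by
  simpa using lineSeries_apply b k 1

lemma lineSeries_hasFPowerSeriesOnBall {b : ℕ → E} {g : ℂ → E} {ρ : ℝ≥0} (hρ : 0 < ρ)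
    (h : ∀ t : ℂ, ‖t‖ < (ρ : ℝ) → HasSum (fun k => t ^ k • b k) (g t)) :
    HasFPowerSeriesOnBall g (lineSeries b) 0 ρ := by
  constructor
  · apply ENNReal.le_of_forall_nnreal_lt
    intro r hr
    have hrρ : (r : ℝ) < ρ := by exact_mod_cast hr
    set t : ℂ := (((((r : ℝ) + ρ) / 2 : ℝ)) : ℂ)
    have htρ : ‖t‖ < (ρ : ℝ) := by
      have h0 : (0:ℝ) ≤ ((r : ℝ) + ρ) / 2 := by positivity
      simp only [t, Complex.norm_real, Real.norm_eq_abs, abs_of_nonneg h0]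
      linarith
    have hrt : (r : ℝ) ≤ ‖t‖ := by
      have h0 : (0:ℝ) ≤ ((r : ℝ) + ρ) / 2 := by positivity
      simp only [t, Complex.norm_real, Real.norm_eq_abs, abs_of_nonneg h0]
      linarith
    have hsum := (h t htρ).summable
    obtain ⟨C, hC⟩ : ∃ C, ∀ k, ‖t ^ k • b k‖ ≤ C := by
      obtain ⟨C, hC⟩ := (hsum.tendsto_atTop_zero.norm.bddAbove_range)
      exact ⟨C, fun k => hC ⟨k, rfl⟩⟩
    apply FormalMultilinearSeries.le_radius_of_bound _ C
    intro n
    have : ‖lineSeries b n‖ = ‖b n‖ := ContinuousMultilinearMap.norm_mkPiRing (b n)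
    rw [this]
    calc ‖b n‖ * (r:ℝ) ^ n ≤ ‖b n‖ * ‖t‖ ^ n := by
          apply mul_le_mul_of_nonneg_left (pow_le_pow_left₀ r.coe_nonneg hrt n) (norm_nonneg _)
      _ = ‖t ^ n • b n‖ := by rw [norm_smul, norm_pow, mul_comm]
      _ ≤ C := hC n
  · exact_mod_cast hρ
  · intro y hy
    have hy' : ‖y‖ < (ρ : ℝ) := by
      have := hy
      simp only [EMetric.mem_ball, edist_zero_right, ← ENNReal.coe_lt_coe] at this
      simpa [← coe_nnnorm, NNReal.coe_lt_coe] using this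
    simpa [lineSeries_coeff] using h y hy'

lemma coeff_eq_zero_of_hasSum_zero [CompleteSpace E] {b : ℕ → E} {ρ : ℝ≥0} (hρ : 0 < ρ)
    (h : ∀ t : ℂ, ‖t‖ < (ρ : ℝ) → HasSum (fun k => t ^ k • b k) 0) : ∀ k, b k = 0 := by
  have h0 : HasFPowerSeriesOnBall (0 : ℂ → E) (lineSeries b) 0 ρ :=
    lineSeries_hasFPowerSeriesOnBall hρ (by simpa using h)
  have := h0.hasFPowerSeriesAt.eq_zero
  intro k
  have hk := congrFun this k
  have := congrArg (fun (q : ContinuousMultilinearMap ℂ (fun _ : Fin k => ℂ) E) =>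
    q (fun _ => (1:ℂ))) hk
  simpa [lineSeries_coeff] using this

lemma key [CompleteSpace E] {b : ℕ → E} {g : ℂ → E} {ρ : ℝ≥0} (hρ : 0 < ρ)
    (h : ∀ t : ℂ, ‖t‖ < (ρ : ℝ) → HasSum (fun k => t ^ k • b k) (g t)) :
    ∀ t : ℂ, ‖t‖ < (ρ : ℝ) →
      HasSum (fun k : ℕ => t ^ k • (((k : ℂ) - 1) • b k)) (t • deriv g t - g t) := by
  have hball := lineSeries_hasFPowerSeriesOnBall hρ h
  intro t ht
  have hd := hball.fderiv
  have htm : t ∈ Metric.eball (0 : ℂ) ρ := by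
    simp only [Metric.mem_eball, edist_zero_right, ← ENNReal.coe_lt_coe]
    simpa [enorm_eq_nnnorm, ← coe_nnnorm, NNReal.coe_lt_coe] using ht
  have h1 : HasSum (fun k => (lineSeries b).derivSeries k (fun _ => t)) (fderiv ℂ g t) := by
    have := hd.hasSum htm
    rwa [zero_add] at this
  have h2 := h1.mapL (ContinuousLinearMap.apply ℂ E t)
  simp only [ContinuousLinearMap.apply_apply] at h2
  have h3 : ∀ k : ℕ, ((lineSeries b).derivSeries k (fun _ => t)) t
      = (k + 1 : ℕ) • (t ^ (k+1) • b (k+1)) := by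
    intro k
    rw [FormalMultilinearSeries.derivSeries_apply_diag, lineSeries_apply]
  have hval : fderiv ℂ g t t = t • deriv g t := by
    rw [← fderiv_apply_one_eq_deriv, ← (fderiv ℂ g t).map_smul, smul_eq_mul, mul_one]
  rw [hval] at h2
  simp only [h3] at h2
  have h4 : HasSum (fun k : ℕ => (k : ℕ) • (t ^ k • b k)) (t • deriv g t) := by
    have h4' := (hasSum_nat_add_iff (f := fun k : ℕ => (k : ℕ) • (t ^ k • b k)) 1).mp
      (by simpa using h2)
    simpa using h4'
  have h5 := h4.sub (h t ht)
  have hfe : (fun k : ℕ => t ^ k • (((k : ℂ) - 1) • b k))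
      = fun k : ℕ => (k : ℕ) • (t ^ k • b k) - t ^ k • b k := by
    funext k
    rw [smul_comm (t ^ k), sub_smul, one_smul, Nat.cast_smul_eq_nsmul]
  rw [hfe]
  exact h5

/-- The operation `ad η` on vector fields. -/
noncomputable def adEta (a : E) (f : E → E) : E → E :=
  fun z => fderiv ℂ f z (z - a) - f z

lemma euler (k : ℕ) (Q : ContinuousMultilinearMap ℂ (fun _ : Fin k => E) E) (a z : E) :
    ∃ D : E →L[ℂ] E, HasFDerivAt (fun z : E => Q (fun _ : Fin k => z - a)) D z ∧
      D (z - a) = (k : ℕ) • Q (fun _ : Fin k => z - a) := by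
  refine ⟨_, HasFDerivAt.multilinear_comp Q (g := fun _ z => z - a)
    (g' := fun _ => ContinuousLinearMap.id ℂ E) (fun _ => (hasFDerivAt_id z).sub_const a), ?_⟩
  simp [ContinuousLinearMap.sum_apply, Function.update_eq_self, Finset.card_univ]

end Stmt2Aux

open Metric Filter Stmt2Aux
open scoped Topology ENNReal NNReal


/-- Let `𝔩` be a finite-dimensional complex Lie algebra of holomorphic vector
fields near `a ∈ E` (closed under the bracket `[f,g] = g'·f − f'·g`), containing
`η = (z − a)∂/∂z`. If `ξ ∈ 𝔩` has the homogeneous expansion `ξ(z) = Σ_k P_k(z−a,…,z−a)`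
near `a`, then `ad(η)ξ = [η,ξ] = ξ'(z)(z−a) − ξ(z)` has the expansion
`Σ_k (k−1)·P_k(z−a,…,z−a)`, at most `d = dim 𝔩` of the homogeneous components are nonzero,
and `ξ` is a polynomial vector field near `a`. -/
theorem stmt_2 {E : Type*} [NormedAddCommGroup E] [NormedSpace ℂ E] [FiniteDimensional ℂ E]
    (a : E) (𝔩 : Submodule ℂ (E → E)) [FiniteDimensional ℂ ↥𝔩] (d : ℕ)
    (hd : Module.finrank ℂ ↥𝔩 = d)
    (hη : (fun z => z - a) ∈ 𝔩)
    (hdiff : ∀ f ∈ 𝔩, ∀ z : E, DifferentiableAt ℂ f z)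
    (hbracket : ∀ f ∈ 𝔩, ∀ g ∈ 𝔩,
      (fun z => fderiv ℂ g z (f z) - fderiv ℂ f z (g z)) ∈ 𝔩)
    (ξ : E → E) (hξ : ξ ∈ 𝔩)
    (P : (k : ℕ) → ContinuousMultilinearMap ℂ (fun _ : Fin k => E) E)
    (U : Set E) (hU : U ∈ nhds a)
    (hexp : ∀ z ∈ U, HasSum (fun k : ℕ => P k (fun _ => z - a)) (ξ z)) :
    (∀ z ∈ U, HasSum (fun k : ℕ => ((k : ℂ) - 1) • P k (fun _ => z - a))
        (fderiv ℂ ξ z (z - a) - ξ z))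
      ∧ {k : ℕ | (fun z : E => P k (fun _ => z - a)) ≠ 0}.Finite
      ∧ Set.ncard {k : ℕ | (fun z : E => P k (fun _ => z - a)) ≠ 0} ≤ d
      ∧ ∃ N : ℕ, ∀ z ∈ U, ξ z = ∑ k ∈ Finset.range N, P k (fun _ => z - a) := by
  haveI : CompleteSpace E := FiniteDimensional.complete ℂ E
  obtain ⟨r, hr0, hrU⟩ := Metric.mem_nhds_iff.mp hU
  -- membership of iterated brackets
  have hmem : ∀ j : ℕ, (adEta a)^[j] ξ ∈ 𝔩 := by
    intro j
    induction j with
    | zero => simpa using hξ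
    | succ j ih =>
      rw [Function.iterate_succ_apply']
      have h2 := hbracket _ hη _ ih
      have heq : (fun z => fderiv ℂ ((adEta a)^[j] ξ) z ((fun z => z - a) z)
          - fderiv ℂ (fun z => z - a) z (((adEta a)^[j] ξ) z)) = adEta a ((adEta a)^[j] ξ) := by
        funext z
        have hfd : fderiv ℂ (fun w : E => w - a) z = ContinuousLinearMap.id ℂ E := by
          rw [fderiv_sub_const, fderiv_id']
        show _ - fderiv ℂ (fun w : E => w - a) z _ = _
        rw [hfd]
        rfl
      rw [← heq]
      exact h2
  -- expansions of iterated brackets along lines through `a`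
  have hline : ∀ (j : ℕ) (v : E), ‖v‖ < r → ∀ t : ℂ, ‖t‖ < ((1 : ℝ≥0) : ℝ) →
      HasSum (fun k : ℕ => t ^ k • (((k : ℂ) - 1) ^ j • P k (fun _ => v)))
        ((adEta a)^[j] ξ (a + t • v)) := by
    intro j
    induction j with
    | zero =>
      intro v hv t ht
      have hz : a + t • v ∈ U := by
        apply hrU
        simp only [mem_ball, dist_eq_norm, add_sub_cancel_left]
        calc ‖t • v‖ = ‖t‖ * ‖v‖ := norm_smul _ _
          _ ≤ 1 * ‖v‖ := by
              apply mul_le_mul_of_nonneg_right _ (norm_nonneg v)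
              simpa using ht.le
          _ < r := by simpa using hv
      have h0 := hexp _ hz
      simp only [add_sub_cancel_left] at h0
      have hfe : ∀ k : ℕ, P k (fun _ => t • v) = t ^ k • (((k : ℂ) - 1) ^ 0 • P k (fun _ => v)) := by
        intro k
        rw [pow_zero, one_smul]
        have := (P k).map_smul_univ (fun _ : Fin k => t) (fun _ => v)
        simpa using this
      simp only [Function.iterate_zero_apply]
      simpa only [hfe] using h0
    | succ j ih =>
      intro v hv
      have hkey := key (E := E) (b := fun k => ((k : ℂ) - 1) ^ j • P k (fun _ => v))
        (g := fun t : ℂ => (adEta a)^[j] ξ (a + t • v)) (ρ := 1) one_pos (ih v hv)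
      intro t ht
      have h1 := hkey t ht
      have hder : HasDerivAt (fun s : ℂ => (adEta a)^[j] ξ (a + s • v))
          (fderiv ℂ ((adEta a)^[j] ξ) (a + t • v) v) t := by
        have haff : HasDerivAt (fun s : ℂ => a + s • v) v t := by
          simpa using ((hasDerivAt_id t).smul_const v).const_add a
        exact (hdiff _ (hmem j) (a + t • v)).hasFDerivAt.comp_hasDerivAt t haff
      rw [hder.deriv] at h1
      have hval : t • fderiv ℂ ((adEta a)^[j] ξ) (a + t • v) v - (adEta a)^[j] ξ (a + t • v)
          = (adEta a)^[j+1] ξ (a + t • v) := by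
        rw [Function.iterate_succ_apply']
        show _ = fderiv ℂ ((adEta a)^[j] ξ) (a + t • v) ((a + t • v) - a)
          - (adEta a)^[j] ξ (a + t • v)
        rw [add_sub_cancel_left, (fderiv ℂ ((adEta a)^[j] ξ) (a + t • v)).map_smul]
      rw [hval] at h1
      have hfe : (fun k : ℕ => t ^ k • (((k : ℂ) - 1) ^ (j+1) • P k (fun _ => v)))
          = fun k : ℕ => t ^ k • (((k : ℂ) - 1) • (((k : ℂ) - 1) ^ j • P k (fun _ => v))) := by
        funext k
        rw [smul_smul (((k:ℂ) - 1)), ← pow_succ']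
      rw [hfe]
      exact h1
  set S : Set ℕ := {k : ℕ | (fun z : E => P k (fun _ => z - a)) ≠ 0} with hS
  have hcard : ∀ T : Finset ℕ, ↑T ⊆ S → T.card ≤ d := by
    intro T hTS
    by_contra hTc
    push_neg at hTc
    obtain ⟨T', hT'sub, hT'card⟩ := Finset.exists_subset_card_eq (show d + 1 ≤ T.card from hTc)
    set κ : Fin (d+1) → ℕ := fun i => (T'.orderIsoOfFin hT'card i : ℕ) with hκ
    have hκinj : Function.Injective κ := fun i i' h => by
      have := (T'.orderIsoOfFin hT'card).injective (Subtype.ext h)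
      exact this
    have hκS : ∀ i, κ i ∈ S := fun i => hTS (hT'sub (T'.orderIsoOfFin hT'card i).2)
    set w : Fin (d+1) → 𝔩 := fun j => ⟨(adEta a)^[(j:ℕ)] ξ, hmem j⟩ with hwdef
    have hli : ¬ LinearIndependent ℂ w := by
      intro h
      have := h.fintype_card_le_finrank
      rw [hd] at this
      simp at this
    obtain ⟨g, hg0, i₀, hgi₀⟩ := Fintype.not_linearIndependent_iff.mp hli
    have hfun : ∀ z : E, ∑ j : Fin (d+1), g j • (adEta a)^[(j:ℕ)] ξ (a + z) = 0 := by
      intro z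
      have := congrArg (fun (x : 𝔩) => (x : E → E) (a + z)) hg0
      simpa [hwdef] using this
    have hcoeff : ∀ (v : E), ‖v‖ < r → ∀ k : ℕ,
        (∑ j : Fin (d+1), g j * ((k:ℂ) - 1) ^ (j:ℕ)) • P k (fun _ => v) = 0 := by
      intro v hv
      apply coeff_eq_zero_of_hasSum_zero (ρ := 1) one_pos
      intro t ht
      have hsum : HasSum (fun k : ℕ => ∑ j : Fin (d+1),
          g j • (t ^ k • (((k:ℂ) - 1) ^ (j:ℕ) • P k (fun _ => v))))
          (∑ j : Fin (d+1), g j • (adEta a)^[(j:ℕ)] ξ (a + t • v)) :=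
        hasSum_sum (fun j _ => (hline j v hv t ht).const_smul (g j))
      rw [hfun (t • v)] at hsum
      have hfe : (fun k : ℕ => t ^ k • (∑ j : Fin (d+1), g j * ((k:ℂ) - 1) ^ (j:ℕ)) • P k (fun _ => v))
          = fun k : ℕ => ∑ j : Fin (d+1),
            g j • (t ^ k • (((k:ℂ) - 1) ^ (j:ℕ) • P k (fun _ => v))) := by
        funext k
        rw [Finset.sum_smul, Finset.smul_sum]
        apply Finset.sum_congr rfl
        intro j _
        rw [mul_smul, smul_comm (t ^ k) (g j)]
      rw [hfe]
      exact hsum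
    have hvand : ∀ i : Fin (d+1), ∑ j : Fin (d+1), g j * ((κ i : ℂ) - 1) ^ (j:ℕ) = 0 := by
      intro i
      have hkS := hκS i
      have hex : ∃ z₀ : E, P (κ i) (fun _ => z₀ - a) ≠ 0 := by
        by_contra hc
        push_neg at hc
        exact hkS (funext fun z => hc z)
      obtain ⟨z₀, hz₀⟩ := hex
      set v₀ : E := z₀ - a with hv₀
      set s₀ : ℝ := r / (2 * (‖v₀‖ + 1)) with hs₀
      have hs₀pos : 0 < s₀ := by positivity
      have hsv : ‖(s₀ : ℂ) • v₀‖ < r := by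
        rw [norm_smul, Complex.norm_real, Real.norm_eq_abs, abs_of_pos hs₀pos]
        have h1 : s₀ * ‖v₀‖ < s₀ * (‖v₀‖ + 1) := by
          apply mul_lt_mul_of_pos_left _ hs₀pos
          linarith
        have h2 : s₀ * (‖v₀‖ + 1) = r / 2 := by
          rw [hs₀]
          field_simp
        linarith
      have h1 := hcoeff ((s₀:ℂ) • v₀) hsv (κ i)
      have h2 : P (κ i) (fun _ => (s₀:ℂ) • v₀) = ((s₀:ℂ)) ^ (κ i) • P (κ i) (fun _ => v₀) := by
        have := (P (κ i)).map_smul_univ (fun _ : Fin (κ i) => (s₀:ℂ)) (fun _ => v₀)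
        simpa using this
      rw [h2] at h1
      rcases smul_eq_zero.mp h1 with h | h
      · exact h
      · exfalso
        rcases smul_eq_zero.mp h with h' | h'
        · have : (s₀ : ℂ) ≠ 0 := by exact_mod_cast hs₀pos.ne'
          exact (pow_ne_zero _ this) h'
        · exact hz₀ h'
    set x : Fin (d+1) → ℂ := fun i => ((κ i : ℕ) : ℂ) - 1 with hx
    have hxinj : Function.Injective x := by
      intro i i' h
      apply hκinj
      have h2 : ((κ i : ℕ) : ℂ) = ((κ i' : ℕ) : ℂ) := by
        have := h
        simpa [hx, sub_left_inj] using this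
      exact_mod_cast h2
    have hdet : (Matrix.vandermonde x).det ≠ 0 := Matrix.det_vandermonde_ne_zero_iff.mpr hxinj
    have hmul : (Matrix.vandermonde x).mulVec g = 0 := by
      funext i
      simp only [Matrix.mulVec, dotProduct, Matrix.vandermonde_apply, Pi.zero_apply]
      rw [← hvand i]
      apply Finset.sum_congr rfl
      intro j _
      ring
    have hg00 := Matrix.eq_zero_of_mulVec_eq_zero hdet hmul
    exact hgi₀ (congrFun hg00 i₀)
  have hSfin : S.Finite := by
    by_contra hinf
    obtain ⟨T, hTS, hTcard⟩ := Set.Infinite.exists_subset_card_eq hinf (d+1)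
    have := hcard T hTS
    omega
  have hSncard : S.ncard ≤ d := by
    have h := hcard hSfin.toFinset (by simp)
    rwa [← Set.ncard_coe_finset, Set.Finite.coe_toFinset] at h
  obtain ⟨N, hN⟩ : ∃ N : ℕ, ∀ k ∈ S, k < N := by
    obtain ⟨m, hm⟩ := hSfin.bddAbove
    exact ⟨m + 1, fun k hk => Nat.lt_succ_of_le (hm hk)⟩
  have hPzero : ∀ k : ℕ, k ∉ Finset.range N → ∀ z : E, P k (fun _ => z - a) = 0 := by
    intro k hk z
    have hkS : k ∉ S := fun h => hk (Finset.mem_range.mpr (hN k h))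
    have h0 : (fun z : E => P k (fun _ => z - a)) = 0 := not_not.mp hkS
    exact congrFun h0 z
  have hpoly : ∀ z ∈ U, ξ z = ∑ k ∈ Finset.range N, P k (fun _ => z - a) := by
    intro z hz
    exact (hexp z hz).unique (hasSum_sum_of_ne_finset_zero (fun k hk => hPzero k hk z))
  set F : E → E := fun z => ∑ k ∈ Finset.range N, P k (fun _ => z - a) with hF
  choose D hD hDval using fun (k : ℕ) (z : E) => euler k (P k) a z
  have hFder : ∀ z : E, HasFDerivAt F (∑ k ∈ Finset.range N, D k z) z := by
    intro z
    exact HasFDerivAt.fun_sum (fun k _ => hD k z)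
  have hglob : ∀ z : E, ξ z = F z := by
    intro z
    set w : E := z - a with hw
    set G : ℂ → E := fun t => ξ (a + t • w) - F (a + t • w) with hG
    have haffd : ∀ t : ℂ, DifferentiableAt ℂ (fun s : ℂ => a + s • w) t := by
      intro t
      exact (differentiableAt_id.smul_const w).const_add a
    have hGdiff : Differentiable ℂ G := by
      intro t
      exact ((hdiff ξ hξ _).comp t (haffd t)).sub
        (((hFder _).differentiableAt).comp t (haffd t))
    have hG0 : G =ᶠ[𝓝 (0:ℂ)] 0 := by
      have hδ : 0 < r / (‖w‖ + 1) := by positivity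
      filter_upwards [Metric.ball_mem_nhds (0:ℂ) hδ] with t ht
      have htn : ‖t‖ < r / (‖w‖ + 1) := by
        simpa [mem_ball, dist_eq_norm] using ht
      have htU : a + t • w ∈ U := by
        apply hrU
        simp only [mem_ball, dist_eq_norm, add_sub_cancel_left]
        rw [norm_smul]
        calc ‖t‖ * ‖w‖ ≤ ‖t‖ * (‖w‖ + 1) := by nlinarith [norm_nonneg t, norm_nonneg w]
          _ < (r / (‖w‖ + 1)) * (‖w‖ + 1) := by
              apply mul_lt_mul_of_pos_right htn (by positivity)
          _ = r := by field_simp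
      have hp := hpoly _ htU
      simp only [hG, Pi.zero_apply]
      rw [hp, hF]
      simp
    have hGanalytic : AnalyticOnNhd ℂ G Set.univ :=
      hGdiff.differentiableOn.analyticOnNhd isOpen_univ
    have hGzero := hGanalytic.eqOn_zero_of_preconnected_of_eventuallyEq_zero
      isPreconnected_univ (Set.mem_univ (0:ℂ)) hG0
    have h1 := hGzero (Set.mem_univ (1:ℂ))
    simp only [hG, Pi.zero_apply, one_smul] at h1
    have haz : a + w = z := by rw [hw]; abel
    rw [haz] at h1
    exact sub_eq_zero.mp h1
  have hξF : ξ = F := funext hglob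
  refine ⟨?_, hSfin, hSncard, ⟨N, hpoly⟩⟩
  intro z hz
  have hfd : fderiv ℂ ξ z (z - a) = ∑ k ∈ Finset.range N, (k : ℕ) • P k (fun _ => z - a) := by
    rw [hξF, (hFder z).fderiv, ContinuousLinearMap.sum_apply]
    exact Finset.sum_congr rfl (fun k _ => hDval k z)
  have hvalue : fderiv ℂ ξ z (z - a) - ξ z
      = ∑ k ∈ Finset.range N, ((k:ℂ) - 1) • P k (fun _ => z - a) := by
    rw [hfd, hpoly z hz, ← Finset.sum_sub_distrib]
    apply Finset.sum_congr rfl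
    intro k _
    rw [sub_smul, one_smul, Nat.cast_smul_eq_nsmul]
  rw [hvalue]
  apply hasSum_sum_of_ne_finset_zero
  intro k hk
  rw [hPzero k hk z, smul_zero]
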